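/- For every m ∈ ℕ, the coefficients A_{m,k} := (−1)^{k+1} sinc^{(2m−1)}(1/2 − k) satisfy the closed-form A_{m,k} = ((2m−1)!/(π (k − 1/2)^{2m})) Σ_{j=0}^{m−1} ((−1)^j/(2j)!) (π(k − 1/2))^{2j} for all k ∈ ℤ, where sinc^{(2m−1)} denotes the (2m−1)-st derivative of sinc(t) = sin(πt)/(πt). -/

import Mathlib

open Real Filter Topology

/-- `sinc t = sin(πt)/(πt)`, `sinc 0 = 1`. -/
noncomputable def sinc (t : ℝ) : ℝ :=
  if t = 0 then 1 else Real.sin (Real.pi * t) / (Real.pi * t)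

/-- the `i`-th term of the formula for the `n`-th derivative of sinc away from 0 -/
noncomputable def sincTerm (n i : ℕ) (t : ℝ) : ℝ :=
  (n.choose i : ℝ) * Real.pi ^ i * ((-1 : ℝ) ^ (n - i) * ((n - i).factorial : ℝ) / Real.pi) *
    (Real.sin (Real.pi * t + i * (Real.pi / 2)) * (t ^ (n - i + 1))⁻¹)

lemma sincTerm_hasDerivAt (n i : ℕ) (t : ℝ) (ht : t ≠ 0) :
    HasDerivAt (sincTerm n i)
      ((n.choose i : ℝ) * Real.pi ^ i * ((-1 : ℝ) ^ (n - i) * ((n - i).factorial : ℝ) / Real.pi) *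
        (Real.sin (Real.pi * t + (i+1) * (Real.pi / 2)) * Real.pi * (t ^ (n - i + 1))⁻¹
          + Real.sin (Real.pi * t + i * (Real.pi / 2)) *
            (-(((n - i + 1 : ℕ) : ℝ) * t ^ (n - i)) / (t ^ (n - i + 1)) ^ 2))) t := by
  have h1 : HasDerivAt (fun t : ℝ => Real.sin (Real.pi * t + i * (Real.pi / 2)))
      (Real.cos (Real.pi * t + i * (Real.pi / 2)) * Real.pi) t := by
    have : HasDerivAt (fun t : ℝ => Real.pi * t + i * (Real.pi / 2)) Real.pi t := by
      simpa using ((hasDerivAt_id t).const_mul Real.pi).add_const ((i : ℝ) * (Real.pi / 2))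
    simpa using this.sin
  have h2 : HasDerivAt (fun t : ℝ => (t ^ (n - i + 1))⁻¹)
      (-(((n - i + 1 : ℕ) : ℝ) * t ^ (n - i)) / (t ^ (n - i + 1)) ^ 2) t := by
    simpa using (hasDerivAt_pow (n - i + 1) t).fun_inv (pow_ne_zero _ ht)
  have := ((h1.fun_mul h2).const_mul
    ((n.choose i : ℝ) * Real.pi ^ i * ((-1 : ℝ) ^ (n - i) * ((n - i).factorial : ℝ) / Real.pi)))
  have hcos : Real.cos (Real.pi * t + i * (Real.pi / 2))
      = Real.sin (Real.pi * t + (i + 1) * (Real.pi / 2)) := by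
    rw [show (Real.pi * t + (i + 1) * (Real.pi / 2)) = (Real.pi * t + i * (Real.pi / 2)) + Real.pi / 2 by ring,
      Real.sin_add_pi_div_two]
  rw [hcos] at this; exact this

lemma iteratedDeriv_sinc_eq (n : ℕ) : ∀ t : ℝ, t ≠ 0 →
    iteratedDeriv n _root_.sinc t = ∑ i ∈ Finset.range (n + 1), sincTerm n i t := by
  induction n with
  | zero =>
      intro t ht
      have hpt : Real.pi * t ≠ 0 := mul_ne_zero Real.pi_ne_zero ht
      simp only [iteratedDeriv_zero, _root_.sinc, if_neg ht, Finset.sum_range_one, sincTerm]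
      push_cast
      field_simp
      simp
      rw [show π * (t * 2) / 2 = π * t by ring]
      field_simp
  | succ n ih =>
      intro t ht
      rw [iteratedDeriv_succ]
      have hev : iteratedDeriv n _root_.sinc =ᶠ[𝓝 t]
          fun s => ∑ i ∈ Finset.range (n + 1), sincTerm n i s :=
        (eventually_ne_nhds ht).mono fun s hs => ih s hs
      rw [hev.deriv_eq]
      have hD : HasDerivAt (fun s => ∑ i ∈ Finset.range (n + 1), sincTerm n i s)
          (∑ i ∈ Finset.range (n + 1),
            ((n.choose i : ℝ) * Real.pi ^ i *
              ((-1 : ℝ) ^ (n - i) * ((n - i).factorial : ℝ) / Real.pi) *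
              (Real.sin (Real.pi * t + (i+1) * (Real.pi / 2)) * Real.pi * (t ^ (n - i + 1))⁻¹
                + Real.sin (Real.pi * t + i * (Real.pi / 2)) *
                  (-(((n - i + 1 : ℕ) : ℝ) * t ^ (n - i)) / (t ^ (n - i + 1)) ^ 2)))) t :=
        HasDerivAt.fun_sum fun i _ => sincTerm_hasDerivAt n i t ht
      rw [hD.deriv]
      -- abbreviation
      set X : ℕ → ℝ := fun j => Real.pi ^ j *
        (((-1 : ℝ) ^ (n + 1 - j) * ((n + 1 - j).factorial : ℝ) / Real.pi) *
          (Real.sin (Real.pi * t + j * (Real.pi / 2)) * (t ^ (n + 1 - j + 1))⁻¹)) with hX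
      have hterm : ∀ j, sincTerm (n + 1) j t = ((n + 1).choose j : ℝ) * X j := by
        intro j; simp only [sincTerm, hX]; ring
      have hstep : ∀ i ∈ Finset.range (n + 1),
          ((n.choose i : ℝ) * Real.pi ^ i *
            ((-1 : ℝ) ^ (n - i) * ((n - i).factorial : ℝ) / Real.pi) *
            (Real.sin (Real.pi * t + (i+1) * (Real.pi / 2)) * Real.pi * (t ^ (n - i + 1))⁻¹
              + Real.sin (Real.pi * t + i * (Real.pi / 2)) *
                (-(((n - i + 1 : ℕ) : ℝ) * t ^ (n - i)) / (t ^ (n - i + 1)) ^ 2)))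
          = (n.choose i : ℝ) * X (i + 1) + (n.choose i : ℝ) * X i := by
        intro i hi
        have hin : i ≤ n := Nat.lt_succ_iff.mp (Finset.mem_range.mp hi)
        obtain ⟨d, hd⟩ : ∃ d, n - i = d := ⟨n - i, rfl⟩
        have h1 : n + 1 - (i + 1) = d := by omega
        have h2 : n + 1 - i = d + 1 := by omega
        simp only [hX, hd, h1, h2, Nat.factorial_succ]
        push_cast
        have hpow : ∀ a b : ℕ, (t ^ a)⁻¹ * (t ^ b)⁻¹ = (t ^ (a + b))⁻¹ := by
          intro a b; rw [← mul_inv, ← pow_add]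
        field_simp
        ring
      rw [Finset.sum_congr rfl hstep, Finset.sum_add_distrib,
        Finset.sum_congr rfl fun j _ => hterm j]
      rw [Finset.sum_range_succ' (fun j => ((n + 1).choose j : ℝ) * X j) (n + 1)]
      simp only [Nat.choose_succ_succ, Nat.choose_zero_right, Nat.cast_add, add_mul]
      rw [Finset.sum_add_distrib]
      have : (∑ i ∈ Finset.range (n + 1), (n.choose (i + 1) : ℝ) * X (i + 1))
          + (1 : ℝ) * X 0 = ∑ j ∈ Finset.range (n + 1), (n.choose j : ℝ) * X j := by
        have := Finset.sum_range_succ' (fun j => (n.choose j : ℝ) * X j) (n + 1)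
        rw [Finset.sum_range_succ] at this
        simpa [Nat.choose_succ_self] using this.symm
      simp only [Nat.succ_eq_add_one, Nat.cast_one]
      rw [add_assoc, this]

lemma sum_range_even_of_odd_zero (f : ℕ → ℝ) (m : ℕ) (h : ∀ j, f (2 * j + 1) = 0) :
    ∑ i ∈ Finset.range (2 * m), f i = ∑ j ∈ Finset.range m, f (2 * j) := by
  induction m with
  | zero => simp
  | succ p ih =>
      rw [show 2 * (p + 1) = 2 * p + 1 + 1 by ring, Finset.sum_range_succ,
        Finset.sum_range_succ, ih, h, Finset.sum_range_succ, add_zero]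

set_option maxHeartbeats 1000000 in
theorem A_coefficient_closed_form (m : ℕ) (hm : 1 ≤ m) (k : ℤ) :
    (-1 : ℝ) ^ (k + 1) * iteratedDeriv (2 * m - 1) _root_.sinc (1 / 2 - (k : ℝ)) =
      ((2 * m - 1).factorial : ℝ) / (Real.pi * ((k : ℝ) - 1 / 2) ^ (2 * m)) *
        ∑ j ∈ Finset.range m,
          ((-1 : ℝ) ^ j / ((2 * j).factorial : ℝ)) *
            (Real.pi * ((k : ℝ) - 1 / 2)) ^ (2 * j) := by
  have hs : ((k : ℝ) - 1 / 2) ≠ 0 := by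
    intro h
    have h2 : ((2 * k : ℤ) : ℝ) = 1 := by push_cast; linarith
    have : (2 * k : ℤ) = 1 := by exact_mod_cast h2
    omega
  have ht : (1 / 2 - (k : ℝ)) ≠ 0 := by intro h; apply hs; linarith
  have ha2 : (-1 : ℝ) ^ (k + 1) * (-1 : ℝ) ^ (k + 1) = 1 := by
    rw [← zpow_add₀ (by norm_num : (-1:ℝ) ≠ 0), show k + 1 + (k + 1) = 2 * (k + 1) by ring,
      zpow_mul]
    norm_num
  rw [iteratedDeriv_sinc_eq (2 * m - 1) _ ht, show 2 * m - 1 + 1 = 2 * m by omega]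
  have hzero : ∀ j, sincTerm (2 * m - 1) (2 * j + 1) (1 / 2 - (k : ℝ)) = 0 := by
    intro j
    have harg : Real.pi * (1 / 2 - (k : ℝ)) + ((2 * j + 1 : ℕ) : ℝ) * (Real.pi / 2)
        = ((1 + j - k : ℤ) : ℝ) * Real.pi := by push_cast; ring
    have hsin0 : Real.sin (Real.pi * (1 / 2 - (k : ℝ)) + ((2 * j + 1 : ℕ) : ℝ) * (Real.pi / 2))
        = 0 := by rw [harg, Real.sin_int_mul_pi]
    rw [sincTerm, hsin0, zero_mul, mul_zero]
  rw [sum_range_even_of_odd_zero _ m hzero]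
  have hmain : ∑ j ∈ Finset.range m, sincTerm (2 * m - 1) (2 * j) (1 / 2 - (k : ℝ))
      = (-1 : ℝ) ^ (k + 1) *
        (((2 * m - 1).factorial : ℝ) / (Real.pi * ((k : ℝ) - 1 / 2) ^ (2 * m)) *
          ∑ j ∈ Finset.range m,
            ((-1 : ℝ) ^ j / ((2 * j).factorial : ℝ)) *
              (Real.pi * ((k : ℝ) - 1 / 2)) ^ (2 * j)) := by
    rw [Finset.mul_sum, Finset.mul_sum]
    refine Finset.sum_congr rfl fun j hj => ?_
    have hjm : j < m := Finset.mem_range.mp hj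
    -- evaluate the sine
    have hsin : Real.sin (Real.pi * (1 / 2 - (k : ℝ)) + ((2 * j : ℕ) : ℝ) * (Real.pi / 2))
        = -((-1 : ℝ) ^ j) * (-1 : ℝ) ^ (k + 1) := by
      have harg : Real.pi * (1 / 2 - (k : ℝ)) + ((2 * j : ℕ) : ℝ) * (Real.pi / 2)
          = Real.pi / 2 + (((j : ℤ) - k : ℤ) : ℝ) * Real.pi := by push_cast; ring
      rw [harg, Real.sin_add_int_mul_pi, Real.sin_pi_div_two, mul_one]
      have hz : (-1 : ℝ) ^ (k + 1) * (-1 : ℝ) ^ ((j : ℤ) - k) = -((-1 : ℝ) ^ j) := by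
        rw [← zpow_add₀ (by norm_num : (-1:ℝ) ≠ 0),
          show k + 1 + ((j : ℤ) - k) = ((j + 1 : ℕ) : ℤ) by push_cast; ring,
          zpow_natCast, pow_succ, mul_neg_one]
      calc (-1 : ℝ) ^ ((j : ℤ) - k)
          = ((-1 : ℝ) ^ (k + 1) * (-1 : ℝ) ^ (k + 1)) * (-1 : ℝ) ^ ((j : ℤ) - k) := by
            rw [ha2, one_mul]
        _ = (-1 : ℝ) ^ (k + 1) * ((-1 : ℝ) ^ (k + 1) * (-1 : ℝ) ^ ((j : ℤ) - k)) := by ring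
        _ = -((-1 : ℝ) ^ j) * (-1 : ℝ) ^ (k + 1) := by rw [hz]; ring
    have hodd : Odd (2 * m - 1 - 2 * j) := ⟨m - j - 1, by omega⟩
    have h1 : 2 * m - 1 - 2 * j + 1 = 2 * (m - j) := by omega
    have hC : (((2 * m - 1).choose (2 * j) : ℕ) : ℝ)
        = ((2 * m - 1).factorial : ℝ) /
          (((2 * j).factorial : ℝ) * ((2 * m - 1 - 2 * j).factorial : ℝ)) := by
      rw [Nat.cast_choose ℝ (by omega : 2 * j ≤ 2 * m - 1)]
    have hbase : (1 / 2 - (k : ℝ)) ^ (2 * (m - j)) = ((k : ℝ) - 1 / 2) ^ (2 * (m - j)) := by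
      rw [show (1 / 2 - (k : ℝ)) = -((k : ℝ) - 1 / 2) by ring, Even.neg_pow ⟨m - j, by ring⟩]
    have hsplit : ((k : ℝ) - 1 / 2) ^ (2 * m)
        = ((k : ℝ) - 1 / 2) ^ (2 * (m - j)) * ((k : ℝ) - 1 / 2) ^ (2 * j) := by
      rw [← pow_add]; congr 1; omega
    rw [sincTerm, hsin, h1, hbase, hC, hodd.neg_one_pow, hsplit]
    have hf1 : ((2 * j).factorial : ℝ) ≠ 0 := Nat.cast_ne_zero.mpr (Nat.factorial_ne_zero _)
    have hf2 : ((2 * m - 1 - 2 * j).factorial : ℝ) ≠ 0 :=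
      Nat.cast_ne_zero.mpr (Nat.factorial_ne_zero _)
    set s : ℝ := (k : ℝ) - 1 / 2 with hsdef
    rw [mul_pow]
    field_simp
  rw [hmain, ← mul_assoc, ha2, one_mul]
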